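/- arXiv:2407.04409 — 2 statements merged into one kernel-verified Lean document; each statement's English description precedes it below -/
import Mathlib

section
/- For every natural number n, the Fibonacci-Fubini number satisfies the Dobiński-like formula 𝓕_n = (1/√5) · ( (α/e^α) · Σ_{k=0}^{∞} α^k k^n / k! − (β/e^β) · Σ_{k=0}^{∞} β^k k^n / k! ), where α = (1+√5)/2 and β = (1−√5)/2; in particular both infinite series converge. -/
/-- Stirling numbers of the second kind. -/
def stirling2 : ℕ → ℕ → ℕ
  | 0, 0 => 1
  | 0, _ + 1 => 0
  | _ + 1, 0 => 0
  | n + 1, k + 1 => stirling2 n k + (k + 1) * stirling2 n (k + 1)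

lemma stirling2_eq_zero : ∀ {n k : ℕ}, n < k → stirling2 n k = 0
  | 0, _ + 1, _ => rfl
  | n + 1, k + 1, h => by
    have h1 : n < k := Nat.lt_of_succ_lt_succ h
    rw [stirling2, stirling2_eq_zero h1, stirling2_eq_zero (h1.trans (Nat.lt_succ_self k))]
    simp

lemma pow_eq_sum_stirling2 (n k : ℕ) :
    k ^ n = ∑ j ∈ Finset.range (n + 1), stirling2 n j * k.descFactorial j := by
  induction n with
  | zero => simp [stirling2]
  | succ n ih =>
    have key : ∀ j, k * k.descFactorial j = k.descFactorial (j + 1) + j * k.descFactorial j := by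
      intro j
      rcases le_or_gt j k with h | h
      · obtain ⟨m, rfl⟩ := Nat.le.dest h
        rw [Nat.descFactorial_succ, Nat.add_sub_cancel_left]
        ring
      · rw [Nat.descFactorial_eq_zero_iff_lt.2 h,
          Nat.descFactorial_eq_zero_iff_lt.2 (h.trans (Nat.lt_succ_self j))]
        simp
    calc k ^ (n + 1) = ∑ j ∈ Finset.range (n + 1),
          stirling2 n j * (k * k.descFactorial j) := by
          rw [pow_succ, ih, Finset.sum_mul]; congr 1; ext j; ring
      _ = ∑ j ∈ Finset.range (n + 1), stirling2 n j * k.descFactorial (j + 1)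
          + ∑ j ∈ Finset.range (n + 1), j * stirling2 n j * k.descFactorial j := by
          rw [← Finset.sum_add_distrib]; congr 1; ext j; rw [key]; ring
      _ = ∑ j ∈ Finset.range (n + 2), stirling2 (n + 1) j * k.descFactorial j := by
          rw [Finset.sum_range_succ' (fun j => stirling2 (n + 1) j * k.descFactorial j) (n + 1)]
          have : ∀ j ∈ Finset.range (n + 1), stirling2 (n + 1) (j + 1) * k.descFactorial (j + 1)
              = stirling2 n j * k.descFactorial (j + 1)
                + (j + 1) * stirling2 n (j + 1) * k.descFactorial (j + 1) := by
            intro j _; rw [stirling2]; ring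
          rw [Finset.sum_congr rfl this, Finset.sum_add_distrib]
          have h2 : ∑ j ∈ Finset.range (n + 1),
              (j + 1) * stirling2 n (j + 1) * k.descFactorial (j + 1)
              = ∑ j ∈ Finset.range (n + 1), j * stirling2 n j * k.descFactorial j := by
            rw [Finset.sum_range_succ, stirling2_eq_zero (Nat.lt_succ_self n),
              Finset.sum_range_succ' (fun j => j * stirling2 n j * k.descFactorial j) n]
            simp
          rw [h2]
          simp [stirling2]

open Real in
lemma descFactorial_tsum (x : ℝ) (j : ℕ) :
    Summable (fun k : ℕ => x ^ k * (k.descFactorial j : ℝ) / k.factorial) ∧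
    ∑' k : ℕ, x ^ k * (k.descFactorial j : ℝ) / k.factorial = x ^ j * Real.exp x := by
  set g : ℕ → ℝ := fun k => x ^ k * (k.descFactorial j : ℝ) / k.factorial with hg
  have hshift : ∀ m : ℕ, g (m + j) = x ^ j * (x ^ m / m.factorial) := by
    intro m
    have hd : (m.factorial : ℝ) * ((m + j).descFactorial j : ℝ) = ((m + j).factorial : ℝ) := by
      have := Nat.factorial_mul_descFactorial (Nat.le_add_left j m)
      rw [Nat.add_sub_cancel] at this
      exact_mod_cast this
    have hm : (m.factorial : ℝ) ≠ 0 := Nat.cast_ne_zero.2 m.factorial_ne_zero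
    have hdpos : ((m + j).descFactorial j : ℝ) ≠ 0 := by
      have : (m + j).descFactorial j ≠ 0 := by
        rw [Ne, Nat.descFactorial_eq_zero_iff_lt]
        omega
      exact_mod_cast this
    simp only [hg, ← hd, pow_add]
    field_simp
  have hsum : Summable g := by
    rw [← summable_nat_add_iff j]
    have : (fun m => g (m + j)) = fun m => x ^ j * (x ^ m / m.factorial) := funext hshift
    rw [this]
    exact (Real.summable_pow_div_factorial x).mul_left _
  refine ⟨hsum, ?_⟩
  have hinj : Function.Injective (· + j : ℕ → ℕ) := add_left_injective j
  have hsupp : Function.support g ⊆ Set.range (· + j : ℕ → ℕ) := by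
    intro k hk
    rcases le_or_gt j k with h | h
    · exact ⟨k - j, by show k - j + j = k; omega⟩
    · exfalso; apply hk
      simp [hg, Nat.descFactorial_eq_zero_iff_lt.2 h]
  rw [← hinj.tsum_eq hsupp]
  simp only [hshift]
  rw [tsum_mul_left]
  congr 1
  rw [Real.exp_eq_exp_ℝ, NormedSpace.exp_eq_tsum_div]

open Real in
lemma dobinski_aux (x : ℝ) (n : ℕ) :
    Summable (fun k : ℕ => x ^ k * (k : ℝ) ^ n / k.factorial) ∧
    ∑' k : ℕ, x ^ k * (k : ℝ) ^ n / k.factorial =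
      Real.exp x * ∑ j ∈ Finset.range (n + 1), (stirling2 n j : ℝ) * x ^ j := by
  have hpt : (fun k : ℕ => x ^ k * (k : ℝ) ^ n / k.factorial) =
      fun k : ℕ => ∑ j ∈ Finset.range (n + 1),
        (stirling2 n j : ℝ) * (x ^ k * (k.descFactorial j : ℝ) / k.factorial) := by
    funext k
    have := pow_eq_sum_stirling2 n k
    have hcast : ((k : ℝ)) ^ n = ∑ j ∈ Finset.range (n + 1),
        (stirling2 n j : ℝ) * (k.descFactorial j : ℝ) := by exact_mod_cast this
    rw [hcast, Finset.mul_sum, Finset.sum_div]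
    congr 1; funext j; ring
  have hsum : Summable (fun k : ℕ => x ^ k * (k : ℝ) ^ n / k.factorial) := by
    rw [hpt]
    exact summable_sum fun j _ => ((descFactorial_tsum x j).1.mul_left _)
  refine ⟨hsum, ?_⟩
  rw [hpt, Summable.tsum_finsetSum (fun j _ => ((descFactorial_tsum x j).1.mul_left _))]
  rw [Finset.mul_sum]
  refine Finset.sum_congr rfl fun j _ => ?_
  rw [tsum_mul_left, (descFactorial_tsum x j).2]
  ring

/-- Fibonacci-Fubini numbers. -/
def fibonacciFubini (n : ℕ) : ℕ :=
  ∑ k ∈ Finset.range (n + 1), Nat.fib (k + 1) * stirling2 n k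

open Real in
/-- Dobiński-like formula for the Fibonacci-Fubini numbers. -/
theorem fibonacciFubini_dobinski (n : ℕ) :
    Summable (fun k : ℕ =>
      ((1 + Real.sqrt 5) / 2) ^ k * (k : ℝ) ^ n / (k.factorial : ℝ)) ∧
    Summable (fun k : ℕ =>
      ((1 - Real.sqrt 5) / 2) ^ k * (k : ℝ) ^ n / (k.factorial : ℝ)) ∧
    (fibonacciFubini n : ℝ) =
      (1 / Real.sqrt 5) *
        ((((1 + Real.sqrt 5) / 2) / Real.exp ((1 + Real.sqrt 5) / 2)) *
            ∑' k : ℕ, ((1 + Real.sqrt 5) / 2) ^ k * (k : ℝ) ^ n / (k.factorial : ℝ) -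
          (((1 - Real.sqrt 5) / 2) / Real.exp ((1 - Real.sqrt 5) / 2)) *
            ∑' k : ℕ, ((1 - Real.sqrt 5) / 2) ^ k * (k : ℝ) ^ n / (k.factorial : ℝ)) := by
  have h1 := dobinski_aux ((1 + Real.sqrt 5) / 2) n
  have h2 := dobinski_aux ((1 - Real.sqrt 5) / 2) n
  refine ⟨h1.1, h2.1, ?_⟩
  rw [h1.2, h2.2]
  have key : ∀ x : ℝ, x / Real.exp x * (Real.exp x *
      ∑ j ∈ Finset.range (n + 1), (stirling2 n j : ℝ) * x ^ j)
      = ∑ j ∈ Finset.range (n + 1), (stirling2 n j : ℝ) * x ^ (j + 1) := by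
    intro x
    have hx : x / Real.exp x * (Real.exp x *
        ∑ j ∈ Finset.range (n + 1), (stirling2 n j : ℝ) * x ^ j)
        = x * ∑ j ∈ Finset.range (n + 1), (stirling2 n j : ℝ) * x ^ j := by
      field_simp
    rw [hx, Finset.mul_sum]
    exact Finset.sum_congr rfl fun j _ => by ring
  rw [key, key, ← Finset.sum_sub_distrib, Finset.mul_sum]
  have hL : (fibonacciFubini n : ℝ) = ∑ j ∈ Finset.range (n + 1),
      (Nat.fib (j + 1) : ℝ) * (stirling2 n j : ℝ) := by
    rw [fibonacciFubini]; push_cast; rfl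
  rw [hL]
  refine Finset.sum_congr rfl fun j _ => ?_
  rw [Real.coe_fib_eq (j + 1)]
  simp only [goldenRatio, goldenConj]
  have h5 : Real.sqrt 5 ≠ 0 := by positivity
  field_simp
end

section
/- For every natural number n, the Lucas-Fubini number satisfies the Dobiński-like formula 𝓛_n = (α/e^α) · Σ_{k=0}^{∞} α^k k^n / k! + (β/e^β) · Σ_{k=0}^{∞} β^k k^n / k!, where α = (1+√5)/2 and β = (1−√5)/2; in particular both infinite series converge. -/
/-- Lucas numbers. -/
def lucas : ℕ → ℕ
  | 0 => 2
  | 1 => 1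
  | n + 2 => lucas n + lucas (n + 1)

/-- Lucas-Fubini numbers. -/
def lucasFubini (n : ℕ) : ℕ :=
  ∑ k ∈ Finset.range (n + 1), lucas (k + 1) * stirling2 n k

lemma stirling2_of_lt : ∀ n j : ℕ, n < j → stirling2 n j = 0
  | 0, j+1, _ => rfl
  | n+1, j+1, h => by
    have h1 := stirling2_of_lt n j (by omega)
    have h2 := stirling2_of_lt n (j+1) (by omega)
    simp [stirling2, h1, h2]

lemma mul_descFactorial (k j : ℕ) :
    k * k.descFactorial j = k.descFactorial (j+1) + j * k.descFactorial j := by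
  rcases lt_or_ge k j with h | h
  · simp [Nat.descFactorial_eq_zero_iff_lt.2 h,
      Nat.descFactorial_eq_zero_iff_lt.2 (by omega : k < j+1)]
  · rw [Nat.descFactorial_succ]
    have : k - j + j = k := by omega
    nlinarith [Nat.descFactorial_succ k j]

lemma pow_eq_sum_stirling (n k : ℕ) :
    k ^ n = ∑ j ∈ Finset.range (n+1), stirling2 n j * k.descFactorial j := by
  induction n with
  | zero => simp [stirling2]
  | succ n ih =>
    calc k ^ (n+1)
        = ∑ j ∈ Finset.range (n+1),
            (stirling2 n j * k.descFactorial (j+1) + j * (stirling2 n j * k.descFactorial j)) := by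
          rw [pow_succ, ih, Finset.sum_mul]
          refine Finset.sum_congr rfl fun j _ => ?_
          rw [mul_assoc, mul_comm (Nat.descFactorial k j) k, mul_descFactorial]; ring
      _ = ∑ j ∈ Finset.range (n+1), stirling2 n j * k.descFactorial (j+1)
          + ∑ j ∈ Finset.range (n+1), j * (stirling2 n j * k.descFactorial j) := by
          rw [Finset.sum_add_distrib]
      _ = ∑ j ∈ Finset.range (n+1), stirling2 n j * k.descFactorial (j+1)
          + ∑ j ∈ Finset.range (n+1), (j+1) * (stirling2 n (j+1) * k.descFactorial (j+1)) := by
          congr 1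
          rw [Finset.sum_range_succ' (fun j => j * (stirling2 n j * k.descFactorial j)) n]
          rw [Finset.sum_range_succ]
          simp [stirling2_of_lt n (n+1) (by omega)]
      _ = ∑ j ∈ Finset.range (n+1), stirling2 (n+1) (j+1) * k.descFactorial (j+1) := by
          rw [← Finset.sum_add_distrib]
          refine Finset.sum_congr rfl fun j _ => ?_
          show _ = (stirling2 n j + (j+1) * stirling2 n (j+1)) * k.descFactorial (j+1)
          ring
      _ = ∑ j ∈ Finset.range (n+2), stirling2 (n+1) j * k.descFactorial j := by
          rw [Finset.sum_range_succ' _ (n+1)]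
          have hz : stirling2 (n+1) 0 = 0 := rfl
          simp [hz]

lemma shift_eq (x : ℝ) (j m : ℕ) :
    x ^ (m+j) * ((m+j).descFactorial j : ℝ) / ((m+j).factorial : ℝ)
      = x ^ j * (x ^ m / (m.factorial : ℝ)) := by
  have h0 : (m + j - j).factorial * (m+j).descFactorial j = (m+j).factorial :=
    Nat.factorial_mul_descFactorial (Nat.le_add_left j m)
  rw [Nat.add_sub_cancel] at h0
  have h : (m.factorial : ℝ) * ((m+j).descFactorial j : ℝ) = ((m+j).factorial : ℝ) := by
    exact_mod_cast congrArg (Nat.cast : ℕ → ℝ) h0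
  have h1 : ((m+j).factorial : ℝ) ≠ 0 := Nat.cast_ne_zero.2 (Nat.factorial_ne_zero _)
  have h2 : (m.factorial : ℝ) ≠ 0 := Nat.cast_ne_zero.2 (Nat.factorial_ne_zero _)
  field_simp
  rw [pow_add]
  linear_combination x ^ m * x ^ j * h

lemma summable_desc (x : ℝ) (j : ℕ) :
    Summable (fun k : ℕ => x ^ k * (k.descFactorial j : ℝ) / (k.factorial : ℝ)) := by
  rw [← summable_nat_add_iff j]
  simp only [shift_eq]
  exact (Real.summable_pow_div_factorial x).mul_left _

lemma tsum_desc (x : ℝ) (j : ℕ) :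
    ∑' k : ℕ, x ^ k * (k.descFactorial j : ℝ) / (k.factorial : ℝ) = x ^ j * Real.exp x := by
  rw [← (summable_desc x j).sum_add_tsum_nat_add j]
  have hexp : Real.exp x = ∑' m : ℕ, x ^ m / (m.factorial : ℝ) := by
    rw [Real.exp_eq_exp_ℝ, NormedSpace.exp_eq_tsum_div]
  rw [Finset.sum_eq_zero, hexp]
  · simp only [shift_eq]
    rw [tsum_mul_left, zero_add]
  · intro i hi
    rw [Nat.descFactorial_eq_zero_iff_lt.2 (Finset.mem_range.1 hi)]
    simp

lemma tsum_main (x : ℝ) (n : ℕ) :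
    Summable (fun k : ℕ => x ^ k * (k : ℝ) ^ n / (k.factorial : ℝ)) ∧
    ∑' k : ℕ, x ^ k * (k : ℝ) ^ n / (k.factorial : ℝ)
      = Real.exp x * ∑ j ∈ Finset.range (n+1), (stirling2 n j : ℝ) * x ^ j := by
  have hfun : ∀ k : ℕ, x ^ k * (k : ℝ) ^ n / (k.factorial : ℝ)
      = ∑ j ∈ Finset.range (n+1),
          (stirling2 n j : ℝ) * (x ^ k * (k.descFactorial j : ℝ) / (k.factorial : ℝ)) := by
    intro k
    have h0 : ((k : ℝ)) ^ n
        = ∑ j ∈ Finset.range (n+1), (stirling2 n j : ℝ) * (k.descFactorial j : ℝ) := by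
      exact_mod_cast congrArg (Nat.cast : ℕ → ℝ) (pow_eq_sum_stirling n k)
    rw [h0, Finset.mul_sum, Finset.sum_div]
    exact Finset.sum_congr rfl fun j _ => by ring
  have hsum : ∀ j ∈ Finset.range (n+1),
      Summable (fun k : ℕ =>
        (stirling2 n j : ℝ) * (x ^ k * (k.descFactorial j : ℝ) / (k.factorial : ℝ))) :=
    fun j _ => (summable_desc x j).mul_left _
  refine ⟨(summable_sum hsum).congr fun k => (hfun k).symm, ?_⟩
  rw [tsum_congr hfun, Summable.tsum_finsetSum hsum]
  rw [Finset.mul_sum]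
  refine Finset.sum_congr rfl fun j _ => ?_
  rw [tsum_mul_left, tsum_desc]
  ring

lemma lucas_real : ∀ m : ℕ,
    (lucas m : ℝ) = ((1 + Real.sqrt 5) / 2) ^ m + ((1 - Real.sqrt 5) / 2) ^ m := by
  have h5 : Real.sqrt 5 ^ 2 = 5 := Real.sq_sqrt (by norm_num)
  intro m
  induction m using Nat.twoStepInduction with
  | zero => norm_num [lucas]
  | one => norm_num [lucas]
  | more m ih1 ih2 =>
    show (lucas (m+2) : ℝ) = _
    rw [show lucas (m+2) = lucas m + lucas (m+1) from rfl]
    push_cast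
    rw [ih1, ih2]
    have e1 : ((1 + Real.sqrt 5) / 2) ^ (m+2)
        = ((1 + Real.sqrt 5) / 2) ^ m + ((1 + Real.sqrt 5) / 2) ^ (m+1) := by
      rw [pow_succ, pow_succ]
      linear_combination (((1 + Real.sqrt 5) / 2) ^ m / 4) * h5
    have e2 : ((1 - Real.sqrt 5) / 2) ^ (m+2)
        = ((1 - Real.sqrt 5) / 2) ^ m + ((1 - Real.sqrt 5) / 2) ^ (m+1) := by
      rw [pow_succ, pow_succ]
      linear_combination (((1 - Real.sqrt 5) / 2) ^ m / 4) * h5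
    rw [e1, e2]; ring

open Real in
/-- Dobiński-like formula for the Lucas-Fubini numbers. -/
theorem lucasFubini_dobinski (n : ℕ) :
    Summable (fun k : ℕ =>
      ((1 + Real.sqrt 5) / 2) ^ k * (k : ℝ) ^ n / (k.factorial : ℝ)) ∧
    Summable (fun k : ℕ =>
      ((1 - Real.sqrt 5) / 2) ^ k * (k : ℝ) ^ n / (k.factorial : ℝ)) ∧
    (lucasFubini n : ℝ) =
      (((1 + Real.sqrt 5) / 2) / Real.exp ((1 + Real.sqrt 5) / 2)) *
          (∑' k : ℕ, ((1 + Real.sqrt 5) / 2) ^ k * (k : ℝ) ^ n / (k.factorial : ℝ)) +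
        (((1 - Real.sqrt 5) / 2) / Real.exp ((1 - Real.sqrt 5) / 2)) *
          (∑' k : ℕ, ((1 - Real.sqrt 5) / 2) ^ k * (k : ℝ) ^ n / (k.factorial : ℝ)) := by
  set α : ℝ := (1 + Real.sqrt 5) / 2 with hα
  set β : ℝ := (1 - Real.sqrt 5) / 2 with hβ
  obtain ⟨hsα, htα⟩ := tsum_main α n
  obtain ⟨hsβ, htβ⟩ := tsum_main β n
  refine ⟨hsα, hsβ, ?_⟩
  rw [htα, htβ]
  have key : ∀ x : ℝ, ∀ C : ℝ, x / Real.exp x * (Real.exp x * C) = x * C := by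
    intro x C
    field_simp
  rw [key, key]
  rw [Finset.mul_sum, Finset.mul_sum, ← Finset.sum_add_distrib]
  unfold lucasFubini
  push_cast
  refine Finset.sum_congr rfl fun j _ => ?_
  rw [lucas_real (j+1)]
  rw [pow_succ, pow_succ]
  ring
end
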